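/- Consider two agents with nonempty closed convex sets Z_1, Z_2 ⊆ ℝ^n with Z_1 ∩ Z_2 ≠ ∅, and weights a ∈ (0,1). The two-agent constrained consensus iteration v_i(k+1) = (1−a) z_i(k) + a z_j(k) (j ≠ i), z_i(k+1) = P_{Z_i}[v_i(k+1)] keeps each z_i(k) in Z_i for all k ≥ 1, and the quantity ‖z_1(k) − z̃‖² + ‖z_2(k) − z̃‖² is nonincreasing in k for every z̃ ∈ Z_1 ∩ Z_2. -/

import Mathlib

lemma proj_contract {E : Type*} [NormedAddCommGroup E] [InnerProductSpace ℝ E]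
    {Z : Set E} (hc : Convex ℝ Z) {x p z : E} (hp : p ∈ Z) (hz : z ∈ Z)
    (hmin : ∀ w ∈ Z, ‖x - p‖ ≤ ‖x - w‖) : ‖p - z‖ ≤ ‖x - z‖ := by
  -- first: ⟪x - p, z - p⟫ ≤ 0
  have key : inner ℝ (x - p) (z - p) ≤ (0 : ℝ) := by
    by_contra hpos
    push_neg at hpos
    have hvne : z - p ≠ 0 := by
      intro h
      rw [h, inner_zero_right] at hpos
      exact lt_irrefl _ hpos
    have hs : (0:ℝ) < ‖z - p‖ ^ 2 := pow_pos (norm_pos_iff.mpr hvne) 2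
    set c : ℝ := inner ℝ (x - p) (z - p) with hc'
    set t : ℝ := min 1 (c / ‖z - p‖ ^ 2) with ht
    have ht0 : 0 < t := lt_min one_pos (div_pos hpos hs)
    have ht1 : t ≤ 1 := min_le_left _ _
    have hmem : p + t • (z - p) ∈ Z := by
      have : (1 - t) • p + t • z ∈ Z := hc hp hz (by linarith) (le_of_lt ht0) (by ring)
      convert this using 1
      module
    have hexp : ‖x - (p + t • (z - p))‖ ^ 2
        = ‖x - p‖ ^ 2 - 2 * t * c + t ^ 2 * ‖z - p‖ ^ 2 := by
      have hrw : x - (p + t • (z - p)) = (x - p) - t • (z - p) := by abel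
      rw [hrw, norm_sub_sq_real, real_inner_smul_right, norm_smul]
      simp [hc', mul_pow, abs_of_pos ht0]
      ring
    have hle := hmin _ hmem
    have hsq : ‖x - p‖ ^ 2 ≤ ‖x - (p + t • (z - p))‖ ^ 2 := by
      nlinarith [norm_nonneg (x - (p + t • (z - p))), norm_nonneg (x - p)]
    rw [hexp] at hsq
    have h2 : 2 * c ≤ t * ‖z - p‖ ^ 2 := by nlinarith
    have h3 : t * ‖z - p‖ ^ 2 ≤ c := by
      have : t ≤ c / ‖z - p‖ ^ 2 := min_le_right _ _
      calc t * ‖z - p‖ ^ 2 ≤ (c / ‖z - p‖ ^ 2) * ‖z - p‖ ^ 2 := by nlinarith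
        _ = c := by field_simp
    linarith
  have expand : ‖x - z‖ ^ 2 = ‖x - p‖ ^ 2 + 2 * inner ℝ (x - p) (p - z) + ‖p - z‖ ^ 2 := by
    have hrw : x - z = (x - p) + (p - z) := by abel
    rw [hrw, norm_add_sq_real]
  have hip : inner ℝ (x - p) (p - z) = -(inner ℝ (x - p) (z - p) : ℝ) := by
    have : p - z = -(z - p) := by abel
    rw [this, inner_neg_right]
  have hsqle : ‖p - z‖ ^ 2 ≤ ‖x - z‖ ^ 2 := by
    rw [expand, hip]
    nlinarith [sq_nonneg ‖x - p‖]
  have := pow_le_pow_left₀ (norm_nonneg (p - z)) (le_refl ‖p - z‖) 2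
  nlinarith [norm_nonneg (p - z), norm_nonneg (x - z)]

/-- Two-agent constrained consensus: iterates stay feasible and the summed
squared distance to any point of `Z₁ ∩ Z₂` is nonincreasing. -/
theorem stmt_8 {n : ℕ} (Z₁ Z₂ : Set (EuclideanSpace ℝ (Fin n)))
    (hne₁ : Z₁.Nonempty) (hne₂ : Z₂.Nonempty)
    (hcl₁ : IsClosed Z₁) (hcl₂ : IsClosed Z₂)
    (hconv₁ : Convex ℝ Z₁) (hconv₂ : Convex ℝ Z₂)
    (hint : (Z₁ ∩ Z₂).Nonempty)
    (P₁ P₂ : EuclideanSpace ℝ (Fin n) → EuclideanSpace ℝ (Fin n))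
    (hP₁ : ∀ x, P₁ x ∈ Z₁ ∧ ∀ w ∈ Z₁, ‖x - P₁ x‖ ≤ ‖x - w‖)
    (hP₂ : ∀ x, P₂ x ∈ Z₂ ∧ ∀ w ∈ Z₂, ‖x - P₂ x‖ ≤ ‖x - w‖)
    (a : ℝ) (ha : 0 < a) (ha1 : a < 1)
    (z₁ z₂ : ℕ → EuclideanSpace ℝ (Fin n))
    (h0₁ : z₁ 0 ∈ Z₁) (h0₂ : z₂ 0 ∈ Z₂)
    (hrec₁ : ∀ k, z₁ (k + 1) = P₁ ((1 - a) • z₁ k + a • z₂ k))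
    (hrec₂ : ∀ k, z₂ (k + 1) = P₂ ((1 - a) • z₂ k + a • z₁ k)) :
    (∀ k, 1 ≤ k → z₁ k ∈ Z₁ ∧ z₂ k ∈ Z₂) ∧
      ∀ ztilde ∈ Z₁ ∩ Z₂, ∀ k,
        ‖z₁ (k + 1) - ztilde‖ ^ 2 + ‖z₂ (k + 1) - ztilde‖ ^ 2 ≤
          ‖z₁ k - ztilde‖ ^ 2 + ‖z₂ k - ztilde‖ ^ 2 := by
  constructor
  · intro k hk
    obtain ⟨m, rfl⟩ := Nat.exists_eq_add_of_le hk
    rw [Nat.add_comm, hrec₁, hrec₂]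
    exact ⟨(hP₁ _).1, (hP₂ _).1⟩
  · rintro z ⟨hz1, hz2⟩ k
    have c1 : ‖z₁ (k+1) - z‖ ≤ ‖((1 - a) • z₁ k + a • z₂ k) - z‖ := by
      rw [hrec₁]
      exact proj_contract hconv₁ (hP₁ _).1 hz1 (hP₁ _).2
    have c2 : ‖z₂ (k+1) - z‖ ≤ ‖((1 - a) • z₂ k + a • z₁ k) - z‖ := by
      rw [hrec₂]
      exact proj_contract hconv₂ (hP₂ _).1 hz2 (hP₂ _).2
    have conv : ∀ u v : EuclideanSpace ℝ (Fin n),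
        ‖((1 - a) • u + a • v) - z‖ ^ 2 ≤ (1 - a) * ‖u - z‖ ^ 2 + a * ‖v - z‖ ^ 2 := by
      intro u v
      have hrw : ((1 - a) • u + a • v) - z = (1 - a) • (u - z) + a • (v - z) := by
        module
      have htri : ‖(1 - a) • (u - z) + a • (v - z)‖ ≤
          (1 - a) * ‖u - z‖ + a * ‖v - z‖ := by
        calc _ ≤ ‖(1 - a) • (u - z)‖ + ‖a • (v - z)‖ := norm_add_le _ _
          _ = (1 - a) * ‖u - z‖ + a * ‖v - z‖ := by
            rw [norm_smul, norm_smul, Real.norm_eq_abs, Real.norm_eq_abs,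
              abs_of_pos (by linarith), abs_of_pos ha]
      have hsq := pow_le_pow_left₀ (norm_nonneg _) htri 2
      rw [hrw]
      nlinarith [mul_nonneg (mul_nonneg ha.le (by linarith : (0:ℝ) ≤ 1 - a)) (sq_nonneg (‖u - z‖ - ‖v - z‖))]
    have s1 := conv (z₁ k) (z₂ k)
    have s2 := conv (z₂ k) (z₁ k)
    have d1 := pow_le_pow_left₀ (norm_nonneg _) c1 2
    have d2 := pow_le_pow_left₀ (norm_nonneg _) c2 2
    linarith
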